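/- Let n ≥ 2, let x_1 < ⋯ < x_n be real and m_1, …, m_n > 0, set l_k = x_{k+1} − x_k, let S(z) = G_n(z) L_{n−1} G_{n−1}(z) ⋯ L_1 G_1(z), let (C, B, A)ᵗ = S(z)(1,0,0)ᵗ, define W(z) = B(z)/A(z), Z(z) = C(z)/A(z), W*(z) = −W(−z) and Z*(z) = Z(−z), and for fixed 0 ≤ k ≤ n−1 let a(z) = a^{(2k+1)}(z) be the product of the leftmost 2k+1 factors of S(z). Then, as real functions of z as z → ∞, for each column j = 1, 2, 3: a_{3j}(z) Z*(z) + a_{2j}(z) W*(z) + a_{1j}(z) = O(z^{−(k+1)}). -/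

import Mathlib

open Polynomial Matrix

/-- The transfer matrix `L_k` of the discrete cubic string (with gap `l`). -/
noncomputable def Lmat (l : ℝ) : Matrix (Fin 3) (Fin 3) (Polynomial ℝ) :=
  !![1, Polynomial.C l, Polynomial.C (l ^ 2 / 2);
     0, 1, Polynomial.C l;
     0, 0, 1]

/-- The transfer matrix `G_k(z)` of the discrete cubic string (with mass `m`). -/
noncomputable def Gmat (m : ℝ) : Matrix (Fin 3) (Fin 3) (Polynomial ℝ) :=
  !![1, 0, 0;
     0, 1, 0;
     Polynomial.C (-2 * m) * Polynomial.X, 0, 1]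

/-- The transition matrix `S(z) = G_n(z) L_{n−1} G_{n−1}(z) ⋯ L_1 G_1(z)` of the
discrete cubic string with masses `m 1, …, m n` and gaps `l 1, …, l (n−1)`. -/
noncomputable def transMat (m l : ℕ → ℝ) : ℕ → Matrix (Fin 3) (Fin 3) (Polynomial ℝ)
  | 0 => 1
  | 1 => Gmat (m 1)
  | (k + 2) => Gmat (m (k + 2)) * Lmat (l (k + 1)) * transMat m l (k + 1)

/-- `aMat m l n k` is `a^{(2k+1)}(z) = G_n(z) L_{n−1} G_{n−1}(z) ⋯ L_{n−k} G_{n−k}(z)`,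
the product of the leftmost `2k+1` factors of the transition matrix. -/
noncomputable def aMat (m l : ℕ → ℝ) (n : ℕ) : ℕ → Matrix (Fin 3) (Fin 3) (Polynomial ℝ)
  | 0 => Gmat (m n)
  | (k + 1) => aMat m l n k * Lmat (l (n - (k + 1))) * Gmat (m (n - (k + 1)))

open Filter Asymptotics

/-! ### Auxiliary machinery -/

/-- The involution `p(z) ↦ p(−z)` as a ring homomorphism. -/
noncomputable def sig : Polynomial ℝ →+* Polynomial ℝ := eval₂RingHom Polynomial.C (-X)

lemma sig_apply (p : Polynomial ℝ) : sig p = p.comp (-X) := rfl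

lemma eval_sig (p : Polynomial ℝ) (z : ℝ) : (sig p).eval z = p.eval (-z) := by
  simp [sig_apply, eval_comp]

lemma natDegree_sig (p : Polynomial ℝ) : (sig p).natDegree = p.natDegree := by
  simp [sig_apply, natDegree_comp]

/-- The antidiagonal signature matrix. -/
noncomputable def Jm : Matrix (Fin 3) (Fin 3) (Polynomial ℝ) := !![0,0,1;0,-1,0;1,0,0]

/-- `tau M (z) = J M(−z)ᵀ J`. -/
noncomputable def tau (M : Matrix (Fin 3) (Fin 3) (Polynomial ℝ)) :
    Matrix (Fin 3) (Fin 3) (Polynomial ℝ) := Jm * (M.map sig)ᵀ * Jm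

lemma Jm_sq : Jm * Jm = 1 := by
  refine Matrix.ext fun i j => ?_
  fin_cases i <;> fin_cases j <;>
    simp [Jm, Matrix.mul_apply, Fin.sum_univ_three, Matrix.one_apply,
      Matrix.vecHead, Matrix.vecTail]

lemma tau_mul (M N : Matrix (Fin 3) (Fin 3) (Polynomial ℝ)) :
    tau (M * N) = tau N * tau M := by
  simp only [tau, Matrix.map_mul, transpose_mul, Matrix.mul_assoc]
  rw [← Matrix.mul_assoc Jm Jm, Jm_sq, Matrix.one_mul]

lemma tau_G (c : ℝ) : tau (Gmat c) = Gmat (-c) := by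
  refine Matrix.ext fun i j => Polynomial.funext fun r => ?_
  fin_cases i <;> fin_cases j <;>
    simp [tau, Jm, Gmat, Matrix.mul_apply, Fin.sum_univ_three, eval_sig,
      Matrix.vecMul, dotProduct, Matrix.vecHead, Matrix.vecTail] <;> ring

lemma tau_L (c : ℝ) : tau (Lmat c) = Lmat (-c) := by
  refine Matrix.ext fun i j => Polynomial.funext fun r => ?_
  fin_cases i <;> fin_cases j <;>
    simp [tau, Jm, Lmat, Matrix.mul_apply, Fin.sum_univ_three, eval_sig,
      Matrix.vecMul, dotProduct, Matrix.vecHead, Matrix.vecTail] <;> ring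

lemma G_inv (c : ℝ) : Gmat (-c) * Gmat c = 1 := by
  refine Matrix.ext fun i j => Polynomial.funext fun r => ?_
  fin_cases i <;> fin_cases j <;>
    simp [Gmat, Matrix.mul_apply, Fin.sum_univ_three, Matrix.one_apply,
      Matrix.vecHead, Matrix.vecTail] <;> ring

lemma L_inv (c : ℝ) : Lmat (-c) * Lmat c = 1 := by
  refine Matrix.ext fun i j => Polynomial.funext fun r => ?_
  fin_cases i <;> fin_cases j <;>
    simp [Lmat, Matrix.mul_apply, Fin.sum_univ_three, Matrix.one_apply,
      Matrix.vecHead, Matrix.vecTail] <;> ring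

lemma tau_a (m l : ℕ → ℝ) (n : ℕ) : ∀ k, tau (aMat m l n k) * aMat m l n k = 1 := by
  intro k
  induction k with
  | zero => rw [aMat, tau_G, G_inv]
  | succ k ih =>
      rw [aMat, tau_mul, tau_mul, tau_G, tau_L]
      calc Gmat (-m (n - (k+1))) * (Lmat (-l (n - (k+1))) * tau (aMat m l n k)) *
            (aMat m l n k * Lmat (l (n - (k+1))) * Gmat (m (n - (k+1))))
          = Gmat (-m (n - (k+1))) * (Lmat (-l (n - (k+1))) *
            ((tau (aMat m l n k) * aMat m l n k) *
              (Lmat (l (n - (k+1))) * Gmat (m (n - (k+1)))))) := by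
            simp only [Matrix.mul_assoc]
        _ = 1 := by
            rw [ih, Matrix.one_mul, ← Matrix.mul_assoc (Lmat _), L_inv, Matrix.one_mul, G_inv]

/-- `Pmat m l j = L_j G_j ⋯ L_1 G_1`, the rightmost `2j` factors of the transition matrix. -/
noncomputable def Pmat (m l : ℕ → ℝ) : ℕ → Matrix (Fin 3) (Fin 3) (Polynomial ℝ)
  | 0 => 1
  | (j + 1) => Lmat (l (j + 1)) * Gmat (m (j + 1)) * Pmat m l j

lemma trans_succ (m l : ℕ → ℝ) (j : ℕ) (hj : 1 ≤ j) :
    transMat m l (j + 1) = Gmat (m (j + 1)) * Lmat (l j) * transMat m l j := by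
  cases j with
  | zero => omega
  | succ i => rfl

lemma trans_eq_GP (m l : ℕ → ℝ) : ∀ j, 1 ≤ j → transMat m l j = Gmat (m j) * Pmat m l (j - 1) := by
  intro j
  induction j with
  | zero => omega
  | succ i ih =>
      intro _
      rcases Nat.eq_zero_or_pos i with h | h
      · subst h
        show Gmat (m 1) = _
        rw [show (1:ℕ) - 1 = 0 from rfl, Pmat, Matrix.mul_one]
      · rw [trans_succ m l i h, ih h]
        have h1 : i - 1 + 1 = i := by omega
        have h2 : i + 1 - 1 = i := by omega
        rw [h2, ← h1, Pmat, h1]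
        simp only [Matrix.mul_assoc]

lemma fact_trans (m l : ℕ → ℝ) (n : ℕ) (hn : 2 ≤ n) :
    ∀ k, k ≤ n - 1 → transMat m l n = aMat m l n k * Pmat m l (n - 1 - k) := by
  intro k
  induction k with
  | zero =>
      intro _
      rw [aMat, Nat.sub_zero, trans_eq_GP m l n (by omega)]
  | succ k ih =>
      intro hk
      have e1 : n - 1 - k = (n - 1 - (k + 1)) + 1 := by omega
      have e2 : n - (k + 1) = n - 1 - k := by omega
      rw [ih (by omega), e1, Pmat, aMat, e2, e1]
      simp only [Matrix.mul_assoc]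

lemma entry_deg_mul {A B : Matrix (Fin 3) (Fin 3) (Polynomial ℝ)} {d e : ℕ}
    (hA : ∀ i j, (A i j).natDegree ≤ d) (hB : ∀ i j, (B i j).natDegree ≤ e) :
    ∀ i j, ((A * B) i j).natDegree ≤ d + e := by
  intro i j
  rw [Matrix.mul_apply]
  exact natDegree_sum_le_of_forall_le _ _ fun t _ =>
    natDegree_mul_le.trans (add_le_add (hA i t) (hB t j))

lemma deg_L (c : ℝ) : ∀ i j, ((Lmat c) i j).natDegree ≤ 0 := by
  intro i j
  fin_cases i <;> fin_cases j <;>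
    simp [Lmat, Matrix.vecHead, Matrix.vecTail]

lemma deg_G (c : ℝ) : ∀ i j, ((Gmat c) i j).natDegree ≤ 1 := by
  have hX : (Polynomial.C (-2*c) * X : Polynomial ℝ).natDegree ≤ 1 :=
    (natDegree_C_mul_le _ _).trans (by simp)
  intro i j
  fin_cases i <;> fin_cases j <;>
    first
      | exact hX
      | simp [Gmat, Matrix.vecHead, Matrix.vecTail]

lemma deg_P (m l : ℕ → ℝ) : ∀ j i i', ((Pmat m l j) i i').natDegree ≤ j := by
  intro j
  induction j with
  | zero => intro i i'; rw [Pmat]; fin_cases i <;> fin_cases i' <;> simp [Matrix.one_apply]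
  | succ j ih =>
      intro i i'
      rw [Pmat]
      have h1 : ∀ i i', ((Lmat (l (j+1)) * Gmat (m (j+1))) i i').natDegree ≤ 0 + 1 :=
        entry_deg_mul (deg_L _) (deg_G _)
      have := entry_deg_mul (A := Lmat (l (j+1)) * Gmat (m (j+1))) h1 (fun i j => ih i j) i i'
      simpa [add_comm] using this

lemma GL_col (μ lam : ℝ) (M : Matrix (Fin 3) (Fin 3) (Polynomial ℝ)) :
    (Gmat μ * Lmat lam * M) 0 0 = M 0 0 + C lam * M 1 0 + C (lam^2/2) * M 2 0 ∧
    (Gmat μ * Lmat lam * M) 1 0 = M 1 0 + C lam * M 2 0 ∧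
    (Gmat μ * Lmat lam * M) 2 0 =
      C (-2*μ) * X * ((Gmat μ * Lmat lam * M) 0 0) + M 2 0 := by
  refine ⟨?_, ?_, ?_⟩ <;>
    simp [Gmat, Lmat, Matrix.mul_apply, Fin.sum_univ_three, Matrix.vecHead,
      Matrix.vecTail] <;> ring

lemma colA (n : ℕ) (m l : ℕ → ℝ) (hm : ∀ i, 1 ≤ i → i ≤ n → m i ≠ 0)
    (hl : ∀ i, 1 ≤ i → i ≤ n - 1 → l i ≠ 0) :
    ∀ j, 1 ≤ j → j ≤ n →
      (transMat m l j 0 0).natDegree ≤ j - 1 ∧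
      (transMat m l j 1 0).natDegree ≤ j - 1 ∧
      (transMat m l j 2 0).natDegree ≤ j ∧
      (transMat m l j 2 0).coeff j ≠ 0 := by
  intro j
  induction j with
  | zero => omega
  | succ i ih =>
      intro _ hjn
      rcases Nat.eq_zero_or_pos i with h | h
      · subst h
        have e0 : transMat m l 1 0 0 = 1 := rfl
        have e1 : transMat m l 1 1 0 = 0 := rfl
        have e2 : transMat m l 1 2 0 = C (-2 * m 1) * X := rfl
        refine ⟨by simp [e0], by simp [e1], ?_, ?_⟩
        · rw [e2]; exact (natDegree_C_mul_le _ _).trans (by simp)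
        · rw [e2, coeff_C_mul, coeff_X_one]
          simpa using hm 1 le_rfl hjn
      · obtain ⟨hC, hB, hA, hA0⟩ := ih h (by omega)
        rw [trans_succ m l i h]
        obtain ⟨e0, e1, e2⟩ := GL_col (m (i + 1)) (l i) (transMat m l i)
        have hlne : l i ≠ 0 := hl i h (by omega)
        have hmne : m (i + 1) ≠ 0 := hm (i + 1) (by omega) hjn
        have hC' : (transMat m l i 0 0).natDegree ≤ i := hC.trans (by omega)
        have hB' : (transMat m l i 1 0).natDegree ≤ i := hB.trans (by omega)
        have hCd : ((Gmat (m (i+1)) * Lmat (l i) * transMat m l i) 0 0).natDegree ≤ i := by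
          rw [e0]
          refine (natDegree_add_le _ _).trans (max_le ((natDegree_add_le _ _).trans
            (max_le hC' ((natDegree_C_mul_le _ _).trans hB')))
            ((natDegree_C_mul_le _ _).trans hA))
        have hCc : ((Gmat (m (i+1)) * Lmat (l i) * transMat m l i) 0 0).coeff i
            = (l i)^2/2 * (transMat m l i 2 0).coeff i := by
          rw [e0, coeff_add, coeff_add, coeff_C_mul, coeff_C_mul,
            coeff_eq_zero_of_natDegree_lt (lt_of_le_of_lt hC (by omega)),
            coeff_eq_zero_of_natDegree_lt (lt_of_le_of_lt hB (by omega))]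
          ring
        have hCc0 : ((Gmat (m (i+1)) * Lmat (l i) * transMat m l i) 0 0).coeff i ≠ 0 := by
          rw [hCc]
          exact mul_ne_zero (div_ne_zero (pow_ne_zero _ hlne) two_ne_zero) hA0
        refine ⟨by simpa using hCd, ?_, ?_, ?_⟩
        · rw [e1]
          simpa using (natDegree_add_le _ _).trans
            (max_le hB' ((natDegree_C_mul_le _ _).trans hA))
        · rw [e2]
          refine (natDegree_add_le _ _).trans (max_le ?_ (hA.trans (by omega)))
          refine natDegree_mul_le.trans ?_
          have : (C (-2 * m (i+1)) * X).natDegree ≤ 1 := (natDegree_C_mul_le _ _).trans (by simp)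
          omega
        · rw [e2, coeff_add, mul_assoc, coeff_C_mul, coeff_X_mul,
            coeff_eq_zero_of_natDegree_lt (lt_of_le_of_lt hA (by omega)), add_zero]
          exact mul_ne_zero (by simpa using hmne) hCc0

/-- **The symmetry property of the columns of `a(z) = a^{(2k+1)}(z)`:**
`a_{3j} Z* + a_{2j} W* + a_{1j} = O(z^{−(k+1)})` as `z → ∞`, for each column
`j = 1, 2, 3`, where `W*(z) = −W(−z)` and `Z*(z) = Z(−z)` with `W = B/A`,
`Z = C/A`.  (Matrix indices are 0-based.) -/
theorem stmt13 (n : ℕ) (hn : 2 ≤ n) (x m : ℕ → ℝ)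
    (hx : ∀ i, 1 ≤ i → i < n → x i < x (i + 1))
    (hm : ∀ i, 1 ≤ i → i ≤ n → 0 < m i)
    (l : ℕ → ℝ) (hl : ∀ k, l k = x (k + 1) - x k)
    (k : ℕ) (hk : k ≤ n - 1)
    (W Z Ws Zs : ℝ → ℝ)
    (hW : ∀ z, W z = ((transMat m l n).mulVec ![1, 0, 0] 1).eval z
        / ((transMat m l n).mulVec ![1, 0, 0] 2).eval z)
    (hZ : ∀ z, Z z = ((transMat m l n).mulVec ![1, 0, 0] 0).eval z
        / ((transMat m l n).mulVec ![1, 0, 0] 2).eval z)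
    (hWs : ∀ z, Ws z = -W (-z)) (hZs : ∀ z, Zs z = Z (-z))
    (a : Fin 3 → Fin 3 → Polynomial ℝ) (ha : a = aMat m l n k) :
    ∀ j : Fin 3,
      (fun z => (a 2 j).eval z * Zs z + (a 1 j).eval z * Ws z + (a 0 j).eval z)
        =O[atTop] (fun z : ℝ => (z ^ (k + 1))⁻¹) := by
  intro j
  subst ha
  have hm' : ∀ i, 1 ≤ i → i ≤ n → m i ≠ 0 := fun i h1 h2 => ne_of_gt (hm i h1 h2)
  have hl' : ∀ i, 1 ≤ i → i ≤ n - 1 → l i ≠ 0 := by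
    intro i h1 h2
    have := hx i h1 (by omega)
    rw [hl i]
    intro h
    linarith [sub_eq_zero.mp h]
  obtain ⟨hCdeg, hBdeg, hAdeg, hAco⟩ := colA n m l hm' hl' n (by omega) le_rfl
  -- the denominator polynomial `D(z) = A(−z)`
  have hDnd : (sig (transMat m l n 2 0)).natDegree = n := by
    rw [natDegree_sig]
    exact le_antisymm hAdeg (le_natDegree_of_ne_zero hAco)
  have hDne : sig (transMat m l n 2 0) ≠ 0 := by
    intro h
    rw [h] at hDnd
    simp only [natDegree_zero] at hDnd
    omega
  -- the inversion identity
  have h2 : ((aMat m l n k).map sig)ᵀ * (Jm * aMat m l n k) = Jm := by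
    have ht := tau_a m l n k
    simp only [tau, Matrix.mul_assoc] at ht
    calc ((aMat m l n k).map sig)ᵀ * (Jm * aMat m l n k)
        = Jm * (Jm * (((aMat m l n k).map sig)ᵀ * (Jm * aMat m l n k))) := by
          rw [← Matrix.mul_assoc Jm Jm, Jm_sq, Matrix.one_mul]
      _ = Jm * 1 := by rw [ht]
      _ = Jm := Matrix.mul_one _
  have hkey : ((transMat m l n).map sig)ᵀ * (Jm * aMat m l n k)
      = ((Pmat m l (n - 1 - k)).map sig)ᵀ * Jm := by
    rw [fact_trans m l n hn k hk, Matrix.map_mul, transpose_mul, Matrix.mul_assoc, h2]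
  -- the numerator polynomial
  have hNval : sig (transMat m l n 0 0) * aMat m l n k 2 j
        - sig (transMat m l n 1 0) * aMat m l n k 1 j
        + sig (transMat m l n 2 0) * aMat m l n k 0 j
      = (((Pmat m l (n - 1 - k)).map sig)ᵀ * Jm) 0 j := by
    rw [← hkey]
    fin_cases j <;>
      simp [Matrix.mul_apply, Fin.sum_univ_three, Jm, Matrix.map_apply, Matrix.vecMul,
        dotProduct, Matrix.transpose_apply, Matrix.vecHead, Matrix.vecTail] <;> ring
  have hNdeg : (sig (transMat m l n 0 0) * aMat m l n k 2 j
      - sig (transMat m l n 1 0) * aMat m l n k 1 j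
      + sig (transMat m l n 2 0) * aMat m l n k 0 j).natDegree ≤ n - 1 - k := by
    rw [hNval]
    have hPT : ∀ i i', ((((Pmat m l (n - 1 - k)).map sig)ᵀ) i i').natDegree ≤ n - 1 - k := by
      intro i i'
      rw [Matrix.transpose_apply, Matrix.map_apply, natDegree_sig]
      exact deg_P m l _ i' i
    have hJ : ∀ i i', (Jm i i').natDegree ≤ 0 := by
      intro i i'
      fin_cases i <;> fin_cases i' <;> simp [Jm, Matrix.vecHead, Matrix.vecTail]
    simpa using entry_deg_mul hPT hJ 0 j
  -- pointwise identity
  have hmv : ∀ (M : Matrix (Fin 3) (Fin 3) (Polynomial ℝ)) (i : Fin 3),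
      M.mulVec ![1, 0, 0] i = M i 0 := by
    intro M i
    simp [Matrix.mulVec, dotProduct, Fin.sum_univ_three, Matrix.vecHead]
  have heval : ∀ z : ℝ, (sig (transMat m l n 2 0)).eval z ≠ 0 →
      (aMat m l n k 2 j).eval z * Zs z + (aMat m l n k 1 j).eval z * Ws z
        + (aMat m l n k 0 j).eval z
      = (sig (transMat m l n 0 0) * aMat m l n k 2 j
      - sig (transMat m l n 1 0) * aMat m l n k 1 j
      + sig (transMat m l n 2 0) * aMat m l n k 0 j).eval z / (sig (transMat m l n 2 0)).eval z := by
    intro z hz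
    have hZz : Zs z = (sig (transMat m l n 0 0)).eval z
        / (sig (transMat m l n 2 0)).eval z := by
      rw [hZs, hZ, hmv, hmv, eval_sig, eval_sig]
    have hWz : Ws z = -((sig (transMat m l n 1 0)).eval z
        / (sig (transMat m l n 2 0)).eval z) := by
      rw [hWs, hW, hmv, hmv, eval_sig, eval_sig]
    rw [hZz, hWz]
    field_simp
    simp only [eval_add, eval_sub, eval_mul]
    ring
  -- asymptotics
  have hMO : (fun z : ℝ => ((sig (transMat m l n 0 0) * aMat m l n k 2 j
      - sig (transMat m l n 1 0) * aMat m l n k 1 j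
      + sig (transMat m l n 2 0) * aMat m l n k 0 j) * X ^ (k + 1)).eval z)
      =O[atTop] fun z => (sig (transMat m l n 2 0)).eval z := by
    apply Polynomial.isBigO_of_degree_le
    have h1 : ((sig (transMat m l n 0 0) * aMat m l n k 2 j
      - sig (transMat m l n 1 0) * aMat m l n k 1 j
      + sig (transMat m l n 2 0) * aMat m l n k 0 j) * X ^ (k + 1)).natDegree ≤ n := by
      refine natDegree_mul_le.trans ?_
      have h2 := natDegree_X_pow (R := ℝ) (k + 1)
      omega
    calc ((sig (transMat m l n 0 0) * aMat m l n k 2 j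
      - sig (transMat m l n 1 0) * aMat m l n k 1 j
      + sig (transMat m l n 2 0) * aMat m l n k 0 j) * X ^ (k + 1)).degree
          ≤ (((sig (transMat m l n 0 0) * aMat m l n k 2 j
      - sig (transMat m l n 1 0) * aMat m l n k 1 j
      + sig (transMat m l n 2 0) * aMat m l n k 0 j) * X ^ (k + 1)).natDegree : WithBot ℕ) :=
          degree_le_natDegree
      _ ≤ (n : WithBot ℕ) := by exact_mod_cast h1
      _ = (sig (transMat m l n 2 0)).degree := by rw [degree_eq_natDegree hDne, hDnd]
  obtain ⟨c, hc, hbig⟩ := hMO.exists_pos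
  rw [isBigO_iff]
  refine ⟨c, ?_⟩
  filter_upwards [hbig.bound, eventually_gt_atTop (0 : ℝ),
    Polynomial.eventually_no_roots _ hDne] with z hb hz0 hzD
  have hzD' : (sig (transMat m l n 2 0)).eval z ≠ 0 := hzD
  rw [heval z hzD']
  have hzp : (0 : ℝ) < z ^ (k + 1) := pow_pos hz0 _
  have hDabs : (0 : ℝ) < |(sig (transMat m l n 2 0)).eval z| := abs_pos.mpr hzD'
  simp only [Real.norm_eq_abs] at hb ⊢
  rw [eval_mul, eval_pow, eval_X, abs_mul, abs_of_pos hzp] at hb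
  rw [abs_div, abs_inv, abs_of_pos hzp, div_le_iff₀ hDabs]
  rw [show c * (z ^ (k + 1))⁻¹ * |(sig (transMat m l n 2 0)).eval z|
      = (c * |(sig (transMat m l n 2 0)).eval z|) / z ^ (k + 1) by ring]
  rw [le_div_iff₀ hzp]
  exact hb
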